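/- Let K be a nonempty convex compact subset of a Hausdorff locally convex topological vector space and let F be a group of continuous affine self-maps of K. If F is solvable (there is a chain {1} = F₀ ◁ F₁ ◁ … ◁ Fₙ = F with each quotient F_{i+1}/F_i abelian), then F has a common fixed point in K. -/

import Mathlib

def AffOn {X : Type*} [AddCommGroup X] [Module ℝ X] (K : Set X) (f : K → K) : Prop :=
  ∀ (x y : K) (t : ℝ), 0 ≤ t → t ≤ 1 →
    ∀ h : t • (x : X) + (1 - t) • (y : X) ∈ K,
      (f ⟨_, h⟩ : X) = t • (f x : X) + (1 - t) • (f y : X)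

open Filter Topology Set Pointwise
open scoped commutatorElement

set_option linter.unusedSectionVars false

section MKaux
variable {X : Type*} [AddCommGroup X] [Module ℝ X] [TopologicalSpace X]
  [IsTopologicalAddGroup X] [ContinuousSMul ℝ X] [T2Space X]

lemma MK.smul_tendsto_zero_of_compact {C : Set X} (hC : IsCompact C) {ε : ℕ → ℝ}
    (hε : Tendsto ε atTop (𝓝 0)) {w : ℕ → X} (hw : ∀ n, w n ∈ C) :
    Tendsto (fun n => ε n • w n) atTop (𝓝 (0 : X)) := by
  rw [tendsto_nhds]
  intro V hVo hV0
  have hφ : Continuous fun p : ℝ × X => p.1 • p.2 := continuous_smul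
  have hsub : ({(0:ℝ)} : Set ℝ) ×ˢ C ⊆ (fun p : ℝ × X => p.1 • p.2) ⁻¹' V := by
    rintro ⟨t, x⟩ ⟨ht, hx⟩
    rcases ht with rfl
    simpa using hV0
  obtain ⟨u, v, hu, _, h0u, hCv, huv⟩ :=
    generalized_tube_lemma isCompact_singleton hC (hVo.preimage hφ) hsub
  have h1 : ∀ᶠ n in atTop, ε n ∈ u := hε (hu.mem_nhds (h0u rfl))
  filter_upwards [h1] with n hn
  exact huv (Set.mk_mem_prod hn (hCv (hw n)))

/-- The averaging sequence. -/
noncomputable def MK.avgSeq {K : Set X} (hconv : Convex ℝ K) (u : ℕ → K) : ℕ → K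
  | 0 => u 0
  | n + 1 => ⟨(1/((n:ℝ)+2)) • ((u (n+1) : X)) + (1 - 1/((n:ℝ)+2)) • ((MK.avgSeq hconv u n : X)),
      hconv (u (n+1)).2 (MK.avgSeq hconv u n).2 (by positivity)
        (by
          have h0 : (0:ℝ) ≤ (n:ℝ) := Nat.cast_nonneg n
          have : (1:ℝ)/((n:ℝ)+2) ≤ 1 := by
            rw [div_le_one (by positivity)]; linarith
          linarith)
        (by ring)⟩

/-- Markov-Kakutani for a single continuous affine self-map. -/
theorem MK.single {K : Set X} (hconv : Convex ℝ K) (hcomp : IsCompact K) (hne : K.Nonempty)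
    (f : K → K) (hf : Continuous f) (haff : AffOn K f) : ∃ p, f p = p := by
  obtain ⟨x0, hx0⟩ := hne
  set u : ℕ → K := fun k => f^[k] ⟨x0, hx0⟩ with hu
  have hfu : ∀ k, f (u k) = u (k+1) := by
    intro k
    simp only [hu, Function.iterate_succ_apply']
  set a : ℕ → K := MK.avgSeq hconv u with ha
  have key : ∀ n, (f (a n) : X) = (a n : X) + (1/((n:ℝ)+1)) • ((u (n+1) : X) - (u 0 : X)) := by
    intro n
    induction n with
    | zero =>
      have : a 0 = u 0 := rfl
      rw [this, hfu 0]
      simp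
    | succ n ih =>
      have ht0 : (0:ℝ) ≤ 1/((n:ℝ)+2) := by positivity
      have h0 : (0:ℝ) ≤ (n:ℝ) := Nat.cast_nonneg n
      have ht1 : (1:ℝ)/((n:ℝ)+2) ≤ 1 := by
        rw [div_le_one (by positivity)]; linarith
      have hmem : (1/((n:ℝ)+2)) • ((u (n+1) : X)) + (1 - 1/((n:ℝ)+2)) • ((a n : X)) ∈ K :=
        (a (n+1)).2
      have hstep := haff (u (n+1)) (a n) (1/((n:ℝ)+2)) ht0 ht1 hmem
      have haeq : a (n+1)
          = ⟨(1/((n:ℝ)+2)) • ((u (n+1) : X)) + (1 - 1/((n:ℝ)+2)) • ((a n : X)), hmem⟩ := rfl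
      rw [haeq, hstep, hfu (n+1), ih]
      have h1 : ((n:ℝ)+1) ≠ 0 := by positivity
      have h2 : ((n:ℝ)+2) ≠ 0 := by positivity
      push_cast
      match_scalars <;> field_simp <;> ring
  have : CompactSpace ↥K := isCompact_iff_compactSpace.mp hcomp
  obtain ⟨y, hy⟩ := exists_clusterPt_of_compactSpace (Filter.map a atTop)
  have hy' : MapClusterPt y atTop a := hy
  set g : ↥K → X := fun z => (f z : X) - (z : X) with hg
  have hgc : Continuous g := (continuous_subtype_val.comp hf).sub continuous_subtype_val
  have hgy : MapClusterPt (g y) atTop (g ∘ a) := hy'.continuousAt_comp hgc.continuousAt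
  have htend : Tendsto (g ∘ a) atTop (𝓝 (0:X)) := by
    have heq : (g ∘ a) = fun (n : ℕ) => (1/((n:ℝ)+1)) • ((u (n+1) : X) - (u 0 : X)) := by
      funext n
      simp only [Function.comp_apply, hg, key n]
      abel
    rw [heq]
    have hCcomp : IsCompact (K + (-K)) := hcomp.add hcomp.neg
    refine MK.smul_tendsto_zero_of_compact hCcomp ?_ (fun n => ?_)
    · exact tendsto_one_div_add_atTop_nhds_zero_nat
    · rw [sub_eq_add_neg]
      exact Set.add_mem_add (u (n+1)).2 (Set.neg_mem_neg.2 (u 0).2)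
  have hzero : g y = 0 := by
    have h1 : ClusterPt (g y) (Filter.map (g ∘ a) atTop) := hgy
    have h2 : Filter.map (g ∘ a) atTop ≤ 𝓝 (0:X) := htend
    have h3 : ClusterPt (g y) (𝓝 (0:X)) := h1.mono h2
    have := h3.neBot
    exact t2_iff_nhds.mp ‹T2Space X› this
  refine ⟨y, ?_⟩
  have h4 : (f y : X) - (y : X) = 0 := hzero
  exact Subtype.ext (sub_eq_zero.mp h4)

/-- The set of fixed points of `f : K → K`, as a subset of the ambient space. -/
def MK.FixSet (K : Set X) (f : K → K) : Set X := {x | ∃ hx : x ∈ K, f ⟨x, hx⟩ = ⟨x, hx⟩}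

lemma MK.isCompact_fixSet {K : Set X} (hcomp : IsCompact K) {f : K → K} (hf : Continuous f) :
    IsCompact (MK.FixSet K f) := by
  have : CompactSpace ↥K := isCompact_iff_compactSpace.mp hcomp
  have h1 : IsClosed {z : ↥K | f z = z} := isClosed_eq hf continuous_id
  have h2 : IsCompact {z : ↥K | f z = z} := h1.isCompact
  have h3 : IsCompact (Subtype.val '' {z : ↥K | f z = z}) := h2.image continuous_subtype_val
  have heq : MK.FixSet K f = Subtype.val '' {z : ↥K | f z = z} := by
    ext x
    constructor
    · rintro ⟨hx, hfx⟩
      exact ⟨⟨x, hx⟩, hfx, rfl⟩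
    · rintro ⟨⟨z, hz⟩, hfz, rfl⟩
      exact ⟨hz, hfz⟩
  rw [heq]; exact h3

lemma MK.convex_inter_fix {K : Set X} (hconv : Convex ℝ K) {ι : Type*} (f : ι → (K → K))
    (haff : ∀ i, AffOn K (f i)) (P : ι → Prop) :
    Convex ℝ (K ∩ ⋂ i, ⋂ (_ : P i), MK.FixSet K (f i)) := by
  intro x hx y hy a b ha hb hab
  have hb' : b = 1 - a := by linarith
  subst hb'
  have ha1 : a ≤ 1 := by linarith
  have hK : a • x + (1 - a) • y ∈ K := hconv hx.1 hy.1 ha hb hab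
  refine ⟨hK, ?_⟩
  simp only [Set.mem_iInter]
  intro i hi
  have hxf : f i ⟨x, hx.1⟩ = ⟨x, hx.1⟩ := (Set.mem_iInter.mp (Set.mem_iInter.mp hx.2 i) hi).2
  have hyf : f i ⟨y, hy.1⟩ = ⟨y, hy.1⟩ := (Set.mem_iInter.mp (Set.mem_iInter.mp hy.2 i) hi).2
  refine ⟨hK, ?_⟩
  apply Subtype.ext
  rw [haff i ⟨x, hx.1⟩ ⟨y, hy.1⟩ a ha ha1 hK, hxf, hyf]

/-- Markov-Kakutani for a commuting family of continuous affine self-maps. -/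
theorem MK.comm {K : Set X} (hconv : Convex ℝ K) (hcomp : IsCompact K) (hne : K.Nonempty)
    {ι : Type*} (f : ι → (K → K)) (hf : ∀ i, Continuous (f i)) (haff : ∀ i, AffOn K (f i))
    (hcomm : ∀ i j z, f i (f j z) = f j (f i z)) : ∃ p : K, ∀ i, f i p = p := by
  classical
  have hFc : ∀ i, IsClosed (MK.FixSet K (f i)) :=
    fun i => (MK.isCompact_fixSet hcomp (hf i)).isClosed
  have claim : ∀ s : Finset ι, (K ∩ ⋂ i, ⋂ (_ : i ∈ s), MK.FixSet K (f i)).Nonempty := by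
    intro s
    induction s using Finset.induction_on with
    | empty => simpa using hne
    | @insert a s ha IH =>
      set C : Set X := K ∩ ⋂ i, ⋂ (_ : i ∈ s), MK.FixSet K (f i) with hC
      have hCsub : C ⊆ K := Set.inter_subset_left
      have hCco : IsCompact C :=
        hcomp.inter_right (isClosed_iInter fun i => isClosed_iInter fun _ => hFc i)
      have hCcv : Convex ℝ C := MK.convex_inter_fix hconv f haff _
      have hfixC : ∀ z (hz : z ∈ C) i, i ∈ s → f i ⟨z, hz.1⟩ = ⟨z, hz.1⟩ := by
        intro z hz i hi
        exact (Set.mem_iInter.mp (Set.mem_iInter.mp hz.2 i) hi).2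
      have hinv : ∀ z (hz : z ∈ C), ((f a ⟨z, hz.1⟩ : K) : X) ∈ C := by
        intro z hz
        refine ⟨(f a ⟨z, hz.1⟩).2, ?_⟩
        simp only [Set.mem_iInter]
        intro i hi
        refine ⟨(f a ⟨z, hz.1⟩).2, ?_⟩
        show f i (f a ⟨z, hz.1⟩) = f a ⟨z, hz.1⟩
        rw [hcomm i a, hfixC z hz i hi]
      let g : C → C := fun z => ⟨(f a ⟨z.1, z.2.1⟩ : X), hinv z.1 z.2⟩
      have hincl : Continuous (fun z : C => (⟨z.1, z.2.1⟩ : K)) :=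
        Continuous.subtype_mk continuous_subtype_val _
      have hgc : Continuous g :=
        Continuous.subtype_mk (continuous_subtype_val.comp ((hf a).comp hincl)) _
      have hgaff : AffOn C g := by
        intro x y t ht0 ht1 h
        exact haff a ⟨x.1, x.2.1⟩ ⟨y.1, y.2.1⟩ t ht0 ht1 (hCsub h)
      obtain ⟨p, hp⟩ := MK.single hCcv hCco IH g hgc hgaff
      refine ⟨p.1, p.2.1, ?_⟩
      simp only [Set.mem_iInter, Finset.mem_insert]
      rintro i (rfl | hi)
      · refine ⟨p.2.1, Subtype.ext ?_⟩
        have h5 : ((g p : C) : X) = ((p : C) : X) := congrArg Subtype.val hp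
        exact h5
      · exact ⟨p.2.1, hfixC p.1 p.2 i hi⟩
  by_contra hcon
  push_neg at hcon
  have hemp : K ∩ ⋂ i, MK.FixSet K (f i) = ∅ := by
    rw [Set.eq_empty_iff_forall_notMem]
    rintro x ⟨hxK, hxF⟩
    obtain ⟨i, hi⟩ := hcon ⟨x, hxK⟩
    exact hi (Set.mem_iInter.mp hxF i).2
  obtain ⟨t, ht⟩ := hcomp.elim_finite_subfamily_closed _ hFc hemp
  exact (claim t).ne_empty ht

lemma MK.derived_shift {Γ : Type*} [Group Γ] (k : ℕ) :
    Subgroup.map (commutator Γ).subtype (derivedSeries ↥(commutator Γ) k)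
      ≤ derivedSeries Γ (k + 1) := by
  induction k with
  | zero =>
    rw [derivedSeries_zero, ← MonoidHom.range_eq_map, Subgroup.range_subtype]
    simp
  | succ k ih =>
    rw [derivedSeries_succ, Subgroup.map_commutator, derivedSeries_succ]
    exact Subgroup.commutator_mono ih ih

lemma MK.derived_bot {Γ : Type*} [Group Γ] {n : ℕ} (h : derivedSeries Γ (n + 1) = ⊥) :
    derivedSeries ↥(commutator Γ) n = ⊥ := by
  have h1 := MK.derived_shift (Γ := Γ) n
  rw [h] at h1
  exact (Subgroup.map_eq_bot_iff_of_injective _ (commutator Γ).subtype_injective).mp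
    (le_bot_iff.mp h1)

/-- Main induction: groups with derived series vanishing at stage `n` have common fixed points. -/
theorem MK.aux : ∀ (n : ℕ) (Γ : Type*) [Group Γ], derivedSeries Γ n = ⊥ →
    ∀ (K : Set X), K.Nonempty → Convex ℝ K → IsCompact K →
    ∀ (ρ : Γ →* Function.End K), (∀ g, Continuous (ρ g : K → K) ∧ AffOn K (ρ g : K → K)) →
    ∃ p : K, ∀ g, (ρ g : K → K) p = p := by
  intro n
  induction n with
  | zero =>
    intro Γ _ h K hne hconv hcomp ρ hρ
    refine ⟨⟨hne.choose, hne.choose_spec⟩, fun g => ?_⟩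
    have hg : g = 1 := by
      have h1 : g ∈ (⊥ : Subgroup Γ) := h ▸ Subgroup.mem_top g
      simpa [Subgroup.mem_bot] using h1
    rw [hg, map_one]
    rfl
  | succ n ih =>
    intro Γ instΓ h K hne hconv hcomp ρ hρ
    set N := commutator Γ with hNdef
    have hN : derivedSeries ↥N n = ⊥ := MK.derived_bot h
    have hNnormal : N.Normal := inferInstance
    obtain ⟨p0, hp0⟩ := ih ↥N hN K hne hconv hcomp (ρ.comp N.subtype)
      (fun m => hρ (N.subtype m))
    set K' : Set X := K ∩ ⋂ (g : Γ), ⋂ (_ : g ∈ N), MK.FixSet K (ρ g) with hK'def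
    have hK'sub : K' ⊆ K := Set.inter_subset_left
    have hK'ne : K'.Nonempty := by
      refine ⟨p0.1, p0.2, ?_⟩
      simp only [Set.mem_iInter]
      intro g hg
      exact ⟨p0.2, hp0 ⟨g, hg⟩⟩
    have hK'co : IsCompact K' :=
      hcomp.inter_right (isClosed_iInter fun g => isClosed_iInter fun _ =>
        (MK.isCompact_fixSet hcomp (hρ g).1).isClosed)
    have hK'cv : Convex ℝ K' := MK.convex_inter_fix hconv (fun g => (ρ g : K → K))
      (fun g => (hρ g).2) (· ∈ N)
    have hfix' : ∀ z (hz : z ∈ K') g, g ∈ N → ρ g ⟨z, hz.1⟩ = ⟨z, hz.1⟩ := by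
      intro z hz g hg
      exact (Set.mem_iInter.mp (Set.mem_iInter.mp hz.2 g) hg).2
    have hinv : ∀ (g : Γ) z (hz : z ∈ K'), ((ρ g ⟨z, hz.1⟩ : K) : X) ∈ K' := by
      intro g z hz
      refine ⟨(ρ g ⟨z, hz.1⟩).2, ?_⟩
      simp only [Set.mem_iInter]
      intro m hm
      refine ⟨(ρ g ⟨z, hz.1⟩).2, ?_⟩
      show ρ m (ρ g ⟨z, hz.1⟩) = ρ g ⟨z, hz.1⟩
      have h1 : ρ m (ρ g ⟨z, hz.1⟩) = ρ (m * g) ⟨z, hz.1⟩ := by rw [map_mul]; rfl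
      have h2 : m * g = g * (g⁻¹ * m * g) := by group
      have h3 : g⁻¹ * m * g ∈ N := by
        have h4 := hNnormal.conj_mem m hm g⁻¹
        simpa using h4
      rw [h1, h2, map_mul]
      show ρ g (ρ (g⁻¹ * m * g) ⟨z, hz.1⟩) = _
      rw [hfix' z hz _ h3]
    have hcommK' : ∀ g h' z (hz : z ∈ K'),
        ρ g (ρ h' ⟨z, hz.1⟩) = ρ h' (ρ g ⟨z, hz.1⟩) := by
      intro g h' z hz
      have h1 : ρ g (ρ h' ⟨z, hz.1⟩) = ρ (g * h') ⟨z, hz.1⟩ := by rw [map_mul]; rfl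
      have h2 : ρ h' (ρ g ⟨z, hz.1⟩) = ρ (h' * g) ⟨z, hz.1⟩ := by rw [map_mul]; rfl
      have hc : (h' * g) * ⁅g⁻¹, h'⁻¹⁆ = g * h' := by
        simp only [commutatorElement_def]
        group
      have hmem : ⁅g⁻¹, h'⁻¹⁆ ∈ N :=
        Subgroup.commutator_mem_commutator (Subgroup.mem_top _) (Subgroup.mem_top _)
      rw [h1, h2, ← hc, map_mul]
      show ρ (h' * g) (ρ ⁅g⁻¹, h'⁻¹⁆ ⟨z, hz.1⟩) = ρ (h' * g) ⟨z, hz.1⟩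
      rw [hfix' z hz _ hmem]
    let f' : Γ → (K' → K') := fun g z => ⟨(ρ g ⟨z.1, z.2.1⟩ : X), hinv g z.1 z.2⟩
    have hincl : Continuous (fun z : K' => (⟨z.1, z.2.1⟩ : K)) :=
      Continuous.subtype_mk continuous_subtype_val _
    have hf'c : ∀ g, Continuous (f' g) := fun g =>
      Continuous.subtype_mk (continuous_subtype_val.comp ((hρ g).1.comp hincl)) _
    have hf'aff : ∀ g, AffOn K' (f' g) := by
      intro g x y t ht0 ht1 hmem
      exact (hρ g).2 ⟨x.1, x.2.1⟩ ⟨y.1, y.2.1⟩ t ht0 ht1 (hK'sub hmem)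
    have hf'comm : ∀ g h' z, f' g (f' h' z) = f' h' (f' g z) := by
      intro g h' z
      apply Subtype.ext
      have h6 : ((ρ g (ρ h' ⟨z.1, z.2.1⟩) : K) : X) = ((ρ h' (ρ g ⟨z.1, z.2.1⟩) : K) : X) :=
        congrArg Subtype.val (hcommK' g h' z.1 z.2)
      exact h6
    obtain ⟨p, hp⟩ := MK.comm hK'cv hK'co hK'ne f' hf'c hf'aff hf'comm
    refine ⟨⟨p.1, p.2.1⟩, fun g => Subtype.ext ?_⟩
    have h7 : ((f' g p : K') : X) = ((p : K') : X) := congrArg Subtype.val (hp g)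
    exact h7

end MKaux

theorem stmt9 {X : Type*} [AddCommGroup X] [Module ℝ X] [TopologicalSpace X]
    [IsTopologicalAddGroup X] [ContinuousSMul ℝ X] [T2Space X] [LocallyConvexSpace ℝ X]
    (K : Set X) (hne : K.Nonempty) (hconv : Convex ℝ K) (hcomp : IsCompact K)
    (Γ : Type*) [Group Γ] [Group.IsSolvable Γ]
    (ρ : Γ →* Function.End K)
    (hρ : ∀ g : Γ, Continuous (ρ g : K → K) ∧ AffOn K (ρ g : K → K)) :
    ∃ p : K, ∀ g : Γ, (ρ g : K → K) p = p := by
  obtain ⟨n, hn⟩ := (inferInstance : Group.IsSolvable Γ).solvable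
  exact MK.aux n Γ hn K hne hconv hcomp ρ hρ
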